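/- (Dicke D₂ᴺ construction: support) Let N ≥ 2 and consider the edge relation E on Fin N given by E a j ↔ (a = j ∨ (a ∈ {0,1} ∧ j ∉ {0,1}) ∨ (a ∉ {0,1} ∧ j ∈ {0,1})), with colors C a j = false if a ∈ {0,1} and C a j = true otherwise. Then the set of outcome strings of the perfect matchings of E is exactly the set of strings s : Fin N → Bool having exactly two coordinates equal to false; i.e., the postselected state of this LQN is supported exactly on the computational-basis states of the Dicke state D₂ᴺ (two particles in ↓). -/

import Mathlib

open scoped Classical

/-- Dicke `D₂ᴺ` construction: support: On `Fin N` (`N ≥ 2`) with edge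
relation `E a j ↔ (a = j ∨ (a ∈ {0,1} ∧ j ∉ {0,1}) ∨ (a ∉ {0,1} ∧ j ∈ {0,1}))` and colors
`C a j = false` iff `a ∈ {0,1}`, the set of outcome strings of the perfect matchings of
`E` is exactly the set of strings with exactly two `false` coordinates: the postselected
state is supported exactly on the basis states of the Dicke state `D₂ᴺ`. -/
theorem dicke_support (N : ℕ) [NeZero N] (hN : 2 ≤ N)
    (E : Fin N → Fin N → Prop)
    (hE : ∀ a j, E a j ↔ (a = j ∨
      (a ∈ ({0, 1} : Set (Fin N)) ∧ j ∉ ({0, 1} : Set (Fin N))) ∨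
      (a ∉ ({0, 1} : Set (Fin N)) ∧ j ∈ ({0, 1} : Set (Fin N)))))
    (C : Fin N → Fin N → Bool)
    (hC : ∀ a j, C a j = if a ∈ ({0, 1} : Set (Fin N)) then false else true) :
    (fun σ : Equiv.Perm (Fin N) => fun j => C (σ⁻¹ j) j) ''
        {σ : Equiv.Perm (Fin N) | ∀ a, E a (σ a)} =
      {s : Fin N → Bool | (Finset.univ.filter (fun j => s j = false)).card = 2} := by
  obtain ⟨M, rfl⟩ : ∃ M, N = M + 2 := ⟨N - 2, by omega⟩
  have h01 : (0 : Fin (M + 2)) ≠ 1 := Fin.zero_ne_one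
  ext s
  simp only [Set.mem_image, Set.mem_setOf_eq]
  constructor
  · rintro ⟨σ, hσ, rfl⟩
    have key : (Finset.univ.filter (fun j => C (σ⁻¹ j) j = false))
        = ({σ 0, σ 1} : Finset (Fin (M + 2))) := by
      ext j
      simp only [Finset.mem_filter, Finset.mem_univ, true_and, Finset.mem_insert,
        Finset.mem_singleton, hC]
      constructor
      · intro h
        by_cases hm : σ⁻¹ j ∈ ({0, 1} : Set (Fin (M + 2)))
        · rcases hm with hm | hm
          · left; rw [← hm, (show σ (σ⁻¹ _) = _ from Equiv.apply_symm_apply σ _)]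
          · right; simp only [Set.mem_singleton_iff] at hm
            rw [← hm, (show σ (σ⁻¹ _) = _ from Equiv.apply_symm_apply σ _)]
        · rw [if_neg hm] at h; cases h
      · rintro (rfl | rfl)
        · simp
        · simp
    rw [key]
    rw [Finset.card_insert_of_notMem (by simp [σ.injective.ne h01]),
      Finset.card_singleton]
  · intro h
    obtain ⟨a, b, hab, hF⟩ := Finset.card_eq_two.mp h
    -- choose ordering (j₀, j₁) with j₀ ≠ 1 and j₁ ≠ 0
    obtain ⟨j₀, j₁, hne, hj0, hj1, hset⟩ :
        ∃ j₀ j₁ : Fin (M + 2), j₀ ≠ j₁ ∧ j₀ ≠ 1 ∧ j₁ ≠ 0 ∧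
          ({j₀, j₁} : Finset (Fin (M + 2))) = {a, b} := by
      by_cases hcase : a = 1 ∨ b = 0
      · refine ⟨b, a, hab.symm, ?_, ?_, Finset.pair_comm b a⟩
        · rcases hcase with rfl | rfl
          · exact fun hb => hab hb.symm
          · exact h01
        · rcases hcase with rfl | rfl
          · exact Ne.symm h01
          · exact hab
      · push_neg at hcase
        exact ⟨a, b, hab, hcase.1, hcase.2, rfl⟩
    rw [← hset] at hF
    set σ : Equiv.Perm (Fin (M + 2)) := Equiv.swap 0 j₀ * Equiv.swap 1 j₁ with hσdef
    have hσ0 : σ 0 = j₀ := by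
      simp only [hσdef, Equiv.Perm.mul_apply]
      rw [Equiv.swap_apply_of_ne_of_ne h01 (Ne.symm hj1), Equiv.swap_apply_left]
    have hσ1 : σ 1 = j₁ := by
      simp only [hσdef, Equiv.Perm.mul_apply]
      rw [Equiv.swap_apply_left]
      rcases eq_or_ne j₁ 0 with rfl | h; · exact absurd rfl hj1
      rcases eq_or_ne j₁ j₀ with rfl | h'
      · exact absurd rfl (Ne.symm hne)
      · exact Equiv.swap_apply_of_ne_of_ne h h'
    have hfix : ∀ x, x ≠ 0 → x ≠ 1 → x ≠ j₀ → x ≠ j₁ → σ x = x := by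
      intro x h0 h1 hx0 hx1
      simp only [hσdef, Equiv.Perm.mul_apply]
      rw [Equiv.swap_apply_of_ne_of_ne h1 hx1, Equiv.swap_apply_of_ne_of_ne h0 hx0]
    have hσj₀ : σ j₀ = if j₀ = 0 then j₀ else 0 := by
      split_ifs with h
      · rw [h, hσ0, h]
      · simp only [hσdef, Equiv.Perm.mul_apply]
        rw [Equiv.swap_apply_of_ne_of_ne hj0 hne, Equiv.swap_apply_right]
    have hσj₁ : σ j₁ = if j₁ = 1 then j₁ else 1 := by
      split_ifs with h
      · rw [h, hσ1, h]
      · simp only [hσdef, Equiv.Perm.mul_apply]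
        rw [Equiv.swap_apply_right, Equiv.swap_apply_of_ne_of_ne h01.symm (Ne.symm hj0)]
    refine ⟨σ, ?_, ?_⟩
    · -- perfect matching
      intro x
      rw [hE]
      rcases eq_or_ne x 0 with rfl | hx0
      · rw [hσ0]
        rcases eq_or_ne j₀ 0 with rfl | hj
        · exact Or.inl rfl
        · refine Or.inr (Or.inl ⟨Or.inl rfl, ?_⟩)
          simp only [Set.mem_insert_iff, Set.mem_singleton_iff]
          push_neg; exact ⟨hj, hj0⟩
      rcases eq_or_ne x 1 with rfl | hx1
      · rw [hσ1]
        rcases eq_or_ne j₁ 1 with rfl | hj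
        · exact Or.inl rfl
        · refine Or.inr (Or.inl ⟨Or.inr rfl, ?_⟩)
          simp only [Set.mem_insert_iff, Set.mem_singleton_iff]
          push_neg; exact ⟨hj1, hj⟩
      rcases eq_or_ne x j₀ with rfl | hxj0
      · rw [hσj₀, if_neg hx0]
        refine Or.inr (Or.inr ⟨?_, Or.inl rfl⟩)
        simp only [Set.mem_insert_iff, Set.mem_singleton_iff]
        push_neg; exact ⟨hx0, hx1⟩
      rcases eq_or_ne x j₁ with rfl | hxj1
      · rw [hσj₁, if_neg hx1]
        refine Or.inr (Or.inr ⟨?_, Or.inr rfl⟩)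
        simp only [Set.mem_insert_iff, Set.mem_singleton_iff]
        push_neg; exact ⟨hx0, hx1⟩
      · rw [hfix x hx0 hx1 hxj0 hxj1]; exact Or.inl rfl
    · -- outcome equals s
      funext j
      have hsf : s j = false ↔ j = j₀ ∨ j = j₁ := by
        have := Finset.ext_iff.mp hF j
        simpa using this
      rw [hC]
      have hinv : σ⁻¹ j ∈ ({0, 1} : Set (Fin (M + 2))) ↔ j = j₀ ∨ j = j₁ := by
        simp only [Set.mem_insert_iff, Set.mem_singleton_iff]
        constructor
        · rintro (hh | hh)
          · left; rw [← hσ0, ← hh, (show σ (σ⁻¹ _) = _ from Equiv.apply_symm_apply σ _)]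
          · right; rw [← hσ1, ← hh, (show σ (σ⁻¹ _) = _ from Equiv.apply_symm_apply σ _)]
        · rintro (rfl | rfl)
          · left; rw [← hσ0, (show σ⁻¹ (σ _) = _ from Equiv.symm_apply_apply σ _)]
          · right; rw [← hσ1, (show σ⁻¹ (σ _) = _ from Equiv.symm_apply_apply σ _)]
      split_ifs with hh
      · exact ((hsf.mpr (hinv.mp hh))).symm
      · have : s j ≠ false := fun hc => hh (hinv.mpr (hsf.mp hc))
        exact (Bool.not_eq_false _).mp this |>.symm
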